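/- Let ζ be a Poisson process on Y with finite intensity measure M, let (X_i) be i.i.d. with distribution M(·)/M(Y), let Z be Bernoulli(p) independent of everything, and set ζ_{n,p} = ζ + 1(Z=1)·Σ_{i=1}^n δ_{X_i}. Then dTV(ζ, ζ_{n,p}) ≤ p and dKR(ζ, ζ_{n,p}) ≥ np. In particular, with p_n = 1/√n, dTV(ζ, ζ_{n,p_n}) → 0 while dKR(ζ, ζ_{n,p_n}) → ∞ as n → ∞. -/

import Mathlib

open MeasureTheory ProbabilityTheory Filter
open scoped ENNReal NNReal Classical

/-- Total variation distance between two (counting) measures. -/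
noncomputable def measureTV {Y : Type*} [MeasurableSpace Y] (μ ν : Measure Y) : ℝ :=
  ⨆ A : {A : Set Y // MeasurableSet A ∧ μ A ≠ ⊤ ∧ ν A ≠ ⊤},
    |(μ A.1).toReal - (ν A.1).toReal|

/-- The Kantorovich–Rubinstein distance between two distributions of point processes. -/
noncomputable def dKR {Y : Type*} [MeasurableSpace Y] (Q₁ Q₂ : Measure (Measure Y)) : ℝ≥0∞ :=
  ⨅ C : {C : Measure (Measure Y × Measure Y) //
      C.map Prod.fst = Q₁ ∧ C.map Prod.snd = Q₂},
    ∫⁻ p, ENNReal.ofReal (measureTV p.1 p.2) ∂C.1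

/-- Total variation distance between two point processes. -/
noncomputable def ppTV {Ω Y : Type*} [MeasurableSpace Ω] [MeasurableSpace Y]
    (P : Measure Ω) (ζ₁ ζ₂ : Ω → Measure Y) : ℝ :=
  ⨆ A : {A : Set (Measure Y) // MeasurableSet A},
    |(P (ζ₁ ⁻¹' A.1)).toReal - (P (ζ₂ ⁻¹' A.1)).toReal|

/-- `ζ` is a Poisson process with finite intensity measure `M`. -/
def IsPoissonProcess {Ω Y : Type*} [MeasurableSpace Ω] [MeasurableSpace Y]
    (P : Measure Ω) (ζ : Ω → Measure Y) (M : Measure Y) : Prop :=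
  (∀ A : Set Y, MeasurableSet A → M A ≠ ⊤ → ∀ n : ℕ,
      P {ω | ζ ω A = n}
        = ENNReal.ofReal (Real.exp (-(M A).toReal) * (M A).toReal ^ n / n.factorial)) ∧
  (∀ (m : ℕ) (A : Fin m → Set Y), (∀ i, MeasurableSet (A i)) →
      (Pairwise fun i j => Disjoint (A i) (A j)) →
      iIndepFun (fun i ω => ζ ω (A i)) P)

lemma mass_sub_le_ofReal_measureTV {Y : Type*} [MeasurableSpace Y] (μ ν : Measure Y)
    (hμ : μ Set.univ ≠ ⊤) (hν : ν Set.univ ≠ ⊤) :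
    ν Set.univ - μ Set.univ ≤ ENNReal.ofReal (measureTV μ ν) := by
  have hbdd : BddAbove (Set.range fun A : {A : Set Y // MeasurableSet A ∧ μ A ≠ ⊤ ∧ ν A ≠ ⊤} =>
      |(μ A.1).toReal - (ν A.1).toReal|) := by
    refine ⟨(μ Set.univ).toReal + (ν Set.univ).toReal, ?_⟩
    rintro x ⟨A, rfl⟩
    have h1 : (μ A.1).toReal ≤ (μ Set.univ).toReal :=
      ENNReal.toReal_mono hμ (measure_mono (Set.subset_univ _))
    have h2 : (ν A.1).toReal ≤ (ν Set.univ).toReal :=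
      ENNReal.toReal_mono hν (measure_mono (Set.subset_univ _))
    calc |(μ A.1).toReal - (ν A.1).toReal| ≤ |(μ A.1).toReal| + |(ν A.1).toReal| := abs_sub _ _
      _ = (μ A.1).toReal + (ν A.1).toReal := by
          rw [abs_of_nonneg ENNReal.toReal_nonneg, abs_of_nonneg ENNReal.toReal_nonneg]
      _ ≤ (μ Set.univ).toReal + (ν Set.univ).toReal := add_le_add h1 h2
  have hle : |(μ Set.univ).toReal - (ν Set.univ).toReal| ≤ measureTV μ ν :=
    le_ciSup hbdd ⟨Set.univ, MeasurableSet.univ, hμ, hν⟩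
  have h2 : (ν Set.univ).toReal - (μ Set.univ).toReal ≤ measureTV μ ν :=
    le_trans (by rw [abs_sub_comm]; exact le_abs_self _) hle
  rw [tsub_le_iff_right]
  calc ν Set.univ = ENNReal.ofReal ((ν Set.univ).toReal) := (ENNReal.ofReal_toReal hν).symm
    _ = ENNReal.ofReal (((ν Set.univ).toReal - (μ Set.univ).toReal) + (μ Set.univ).toReal) := by
        ring_nf
    _ ≤ ENNReal.ofReal ((ν Set.univ).toReal - (μ Set.univ).toReal)
        + ENNReal.ofReal ((μ Set.univ).toReal) := ENNReal.ofReal_add_le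
    _ ≤ ENNReal.ofReal (measureTV μ ν) + μ Set.univ :=
        add_le_add (ENNReal.ofReal_le_ofReal h2) (le_of_eq (ENNReal.ofReal_toReal hμ))

lemma tendsto_sqrt_atTop' : Tendsto Real.sqrt atTop atTop := by
  refine tendsto_atTop_atTop.2 fun b => ⟨b ^ 2, fun a ha => ?_⟩
  calc b ≤ |b| := le_abs_self b
    _ = Real.sqrt (b ^ 2) := (Real.sqrt_sq_eq_abs b).symm
    _ ≤ Real.sqrt a := Real.sqrt_le_sqrt ha

/-- Let `ζ` be a Poisson process with finite intensity `M`, `(X_i)` i.i.d. with distribution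
`M/M(Y)`, and for each `n` let `Z n` be a Bernoulli(`p n`) variable independent of everything.
For `ζ_{n,p} = ζ + 1(Z_n = 1) Σ_{i<n} δ_{X_i}` one has `dTV(ζ, ζ_{n,p}) ≤ p n` and
`dKR(ζ, ζ_{n,p}) ≥ n · p n`; in particular, for `p n = 1/√n`, the total variation distance
tends to `0` while the Kantorovich–Rubinstein distance tends to `∞`. -/
theorem tv_vs_dKR_example {Ω Y : Type*} [MeasurableSpace Ω] [MeasurableSpace Y]
    (P : Measure Ω) [IsProbabilityMeasure P]
    (M : Measure Y) [IsFiniteMeasure M] (hM : M ≠ 0)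
    (ζ : Ω → Measure Y) (hζmeas : Measurable ζ) (hζ : IsPoissonProcess P ζ M)
    (X : ℕ → Ω → Y) (hXmeas : ∀ i, Measurable (X i))
    (hXlaw : ∀ i, P.map (X i) = (M Set.univ)⁻¹ • M)
    (hXiid : iIndepFun X P)
    (p : ℕ → ℝ) (hp : ∀ n, 0 < p n ∧ p n ≤ 1)
    (Z : ℕ → Ω → Bool) (hZmeas : ∀ n, Measurable (Z n))
    (hZlaw : ∀ n, P {ω | Z n ω = true} = ENNReal.ofReal (p n))
    (hindep₁ : ∀ n, IndepFun ζ (fun ω => (fun i => X i ω, Z n ω)) P)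
    (hindep₂ : ∀ n, IndepFun (Z n) (fun ω => fun i => X i ω) P)
    (ζnp : ℕ → Ω → Measure Y)
    (hζnp : ∀ n ω, ζnp n ω
      = ζ ω + (if Z n ω = true then ∑ i ∈ Finset.range n, Measure.dirac (X i ω) else 0)) :
    (∀ n, ppTV P ζ (ζnp n) ≤ p n) ∧
    (∀ n, ENNReal.ofReal (n * p n) ≤ dKR (P.map ζ) (P.map (ζnp n))) ∧
    ((∀ n, p n = 1 / Real.sqrt n) →
      (Tendsto (fun n => ppTV P ζ (ζnp n)) atTop (nhds 0) ∧
       Tendsto (fun n => dKR (P.map ζ) (P.map (ζnp n))) atTop (nhds ⊤))) := by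
  have hMuniv : M Set.univ ≠ ⊤ := measure_ne_top M _
  set lam : ℝ := (M Set.univ).toReal with hlamdef
  have hlam0 : 0 ≤ lam := ENNReal.toReal_nonneg
  have hfmeas : Measurable fun ω => ζ ω Set.univ :=
    (Measure.measurable_coe MeasurableSet.univ).comp hζmeas
  have hSk : ∀ k : ℕ, P {ω | ζ ω Set.univ = (k : ℝ≥0∞)}
      = ENNReal.ofReal (Real.exp (-lam) * lam ^ k / k.factorial) := fun k =>
    hζ.1 Set.univ MeasurableSet.univ hMuniv k
  have hSkmeas : ∀ k : ℕ, MeasurableSet {ω | ζ ω Set.univ = (k : ℝ≥0∞)} := fun k =>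
    hfmeas (measurableSet_singleton _)
  have hdisj : Pairwise (Function.onFun Disjoint
      fun k : ℕ => {ω | ζ ω Set.univ = (k : ℝ≥0∞)}) := by
    intro i j hij
    refine Set.disjoint_left.2 fun ω hi hj => hij ?_
    have : ((i : ℝ≥0∞)) = (j : ℝ≥0∞) := by
      rw [← hi, ← hj]
    exact_mod_cast this
  have hck_nonneg : ∀ k : ℕ, 0 ≤ Real.exp (-lam) * lam ^ k / k.factorial := fun k => by
    positivity
  have hsum0 : Summable fun k : ℕ => lam ^ k / k.factorial := Real.summable_pow_div_factorial lam
  have hsumc : Summable fun k : ℕ => Real.exp (-lam) * lam ^ k / k.factorial := by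
    simpa [mul_div_assoc] using hsum0.mul_left (Real.exp (-lam))
  have hexp : ∑' k : ℕ, lam ^ k / k.factorial = Real.exp lam := by
    rw [Real.exp_eq_exp_ℝ, NormedSpace.exp_eq_tsum_div]
  have htsumc : ∑' k : ℕ, Real.exp (-lam) * lam ^ k / k.factorial = 1 := by
    simp_rw [mul_div_assoc]
    rw [tsum_mul_left, hexp, ← Real.exp_add]
    simp
  have hcover : P (⋃ k : ℕ, {ω | ζ ω Set.univ = (k : ℝ≥0∞)}) = 1 := by
    rw [measure_iUnion hdisj hSkmeas]
    simp_rw [hSk]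
    rw [← ENNReal.ofReal_tsum_of_nonneg hck_nonneg hsumc, htsumc, ENNReal.ofReal_one]
  have htopnull : P {ω | ζ ω Set.univ = ⊤} = 0 := by
    have hsub : {ω | ζ ω Set.univ = ⊤} ⊆ (⋃ k : ℕ, {ω | ζ ω Set.univ = (k : ℝ≥0∞)})ᶜ := by
      intro ω hω
      simp only [Set.mem_compl_iff, Set.mem_iUnion, not_exists]
      intro k hk
      rw [Set.mem_setOf_eq] at hω hk
      rw [hω] at hk
      exact (ENNReal.natCast_ne_top k) hk.symm
    refine measure_mono_null hsub ?_
    rw [measure_compl (MeasurableSet.iUnion hSkmeas) (measure_ne_top P _), hcover,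
      measure_univ, tsub_self]
  -- finiteness of the expected total mass of ζ
  have hIζ : ∫⁻ ω, ζ ω Set.univ ∂P ≠ ⊤ := by
    set a : ℕ → ℝ := fun k => (k : ℝ) * (Real.exp (-lam) * lam ^ k / k.factorial) with ha
    have ha_nonneg : ∀ k, 0 ≤ a k := fun k => by
      simp only [ha]; positivity
    have hashift : ∀ k : ℕ, a (k + 1) = (Real.exp (-lam) * lam) * (lam ^ k / k.factorial) := by
      intro k
      simp only [ha, Nat.factorial_succ, pow_succ]
      push_cast
      have h1 : (k.factorial : ℝ) ≠ 0 := by exact_mod_cast k.factorial_ne_zero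
      have h2 : (k : ℝ) + 1 ≠ 0 := by positivity
      field_simp
    have hsuma : Summable a := by
      rw [← summable_nat_add_iff 1]
      simp_rw [hashift]
      exact (hsum0.mul_left _)
    have hbound : ∫⁻ ω, ζ ω Set.univ ∂P ≤ ∑' k : ℕ, ENNReal.ofReal (a k) := by
      set U := ⋃ k : ℕ, {ω | ζ ω Set.univ = (k : ℝ≥0∞)} with hU
      have hUc : P Uᶜ = 0 := by
        rw [measure_compl (MeasurableSet.iUnion hSkmeas) (measure_ne_top P _), hcover,
          measure_univ, tsub_self]
      calc ∫⁻ ω, ζ ω Set.univ ∂P = ∫⁻ ω in Set.univ, ζ ω Set.univ ∂P :=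
            (setLIntegral_univ _).symm
        _ = ∫⁻ ω in U ∪ Uᶜ, ζ ω Set.univ ∂P := by rw [Set.union_compl_self]
        _ ≤ (∫⁻ ω in U, ζ ω Set.univ ∂P) + ∫⁻ ω in Uᶜ, ζ ω Set.univ ∂P :=
            lintegral_union_le _ _ _
        _ = ∫⁻ ω in U, ζ ω Set.univ ∂P := by
            rw [setLIntegral_measure_zero _ _ hUc, add_zero]
        _ ≤ ∑' k : ℕ, ∫⁻ ω in {ω | ζ ω Set.univ = (k : ℝ≥0∞)}, ζ ω Set.univ ∂P :=
            lintegral_iUnion_le _ _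
        _ = ∑' k : ℕ, ENNReal.ofReal (a k) := by
            congr 1
            funext k
            rw [setLIntegral_congr_fun (hSkmeas k)
              (fun ω (hω : ζ ω Set.univ = (k : ℝ≥0∞)) => hω),
              setLIntegral_const, hSk k]
            simp only [ha]
            rw [ENNReal.ofReal_mul (by positivity : (0:ℝ) ≤ (k:ℝ)), ENNReal.ofReal_natCast]
      done
    refine ne_top_of_le_ne_top ?_ hbound
    rw [← ENNReal.ofReal_tsum_of_nonneg ha_nonneg hsuma]
    exact ENNReal.ofReal_ne_top
  -- measurability of ζnp n
  have hζnpmeas : ∀ n, Measurable (ζnp n) := by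
    intro n
    apply Measure.measurable_of_measurable_coe
    intro s hs
    have h1 : (fun ω => ζnp n ω s) = fun ω => ζ ω s +
        (if Z n ω = true then ∑ i ∈ Finset.range n,
          Set.indicator s (1 : Y → ℝ≥0∞) (X i ω) else 0) := by
      funext ω
      rw [hζnp n ω]
      rw [Measure.add_apply]
      congr 1
      by_cases hz : Z n ω = true
      · rw [if_pos hz, if_pos hz, Measure.finset_sum_apply]
        refine Finset.sum_congr rfl fun i _ => ?_
        rw [Measure.dirac_apply' _ hs]
      · rw [if_neg hz, if_neg hz, Measure.coe_zero, Pi.zero_apply]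
    rw [h1]
    refine Measurable.add ((Measure.measurable_coe hs).comp hζmeas) ?_
    refine Measurable.ite ((hZmeas n) (measurableSet_singleton true)) ?_ measurable_const
    exact Finset.measurable_sum _ fun i _ =>
      (measurable_const.indicator hs).comp (hXmeas i)
  -- Part 1
  have part1 : ∀ n, ppTV P ζ (ζnp n) ≤ p n := by
    intro n
    have hpn0 : 0 ≤ p n := (hp n).1.le
    refine Real.iSup_le ?_ hpn0
    rintro ⟨A, hA⟩
    have key : ∀ s t : Set Ω, s ⊆ t ∪ {ω | Z n ω = true} →
        (P s).toReal - (P t).toReal ≤ p n := by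
      intro s t hst
      have h1 : P s ≤ P t + P {ω | Z n ω = true} :=
        (measure_mono hst).trans (measure_union_le _ _)
      have h2 : (P s).toReal ≤ (P t).toReal + (P {ω | Z n ω = true}).toReal := by
        rw [← ENNReal.toReal_add (measure_ne_top P _) (measure_ne_top P _)]
        exact ENNReal.toReal_mono (ENNReal.add_ne_top.2 ⟨measure_ne_top P _, measure_ne_top P _⟩)
          h1
      have h3 : (P {ω | Z n ω = true}).toReal = p n := by
        rw [hZlaw n, ENNReal.toReal_ofReal hpn0]
      linarith
    have hsub1 : ζ ⁻¹' A ⊆ ζnp n ⁻¹' A ∪ {ω | Z n ω = true} := by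
      intro ω hω
      by_cases hz : Z n ω = true
      · exact Or.inr hz
      · left
        show ζnp n ω ∈ A
        rw [hζnp n ω, if_neg hz, add_zero]
        exact hω
    have hsub2 : ζnp n ⁻¹' A ⊆ ζ ⁻¹' A ∪ {ω | Z n ω = true} := by
      intro ω hω
      by_cases hz : Z n ω = true
      · exact Or.inr hz
      · left
        show ζ ω ∈ A
        have : ζnp n ω ∈ A := hω
        rwa [hζnp n ω, if_neg hz, add_zero] at this
    exact abs_sub_le_iff.2 ⟨key _ _ hsub1, key _ _ hsub2⟩
  -- Part 2
  have part2 : ∀ n, ENNReal.ofReal (n * p n) ≤ dKR (P.map ζ) (P.map (ζnp n)) := by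
    intro n
    have hpn0 : 0 ≤ p n := (hp n).1.le
    set T : Set (Measure Y) := {μ : Measure Y | μ Set.univ = ⊤} with hT
    have hTmeas : MeasurableSet T :=
      Measure.measurable_coe MeasurableSet.univ (measurableSet_singleton ⊤)
    have hν₁T : (P.map ζ) T = 0 := by
      rw [Measure.map_apply hζmeas hTmeas]
      exact htopnull
    have hν₂T : (P.map (ζnp n)) T = 0 := by
      rw [Measure.map_apply (hζnpmeas n) hTmeas]
      refine measure_mono_null ?_ htopnull
      intro ω hω
      have hω' : ζnp n ω Set.univ = ⊤ := hω
      rw [hζnp n ω, Measure.add_apply] at hω'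
      rcases ENNReal.add_eq_top.1 hω' with h | h
      · exact h
      · exfalso
        by_cases hz : Z n ω = true
        · rw [if_pos hz, Measure.finset_sum_apply] at h
          have : ∀ i ∈ Finset.range n, Measure.dirac (X i ω) Set.univ = 1 := fun i _ => by
            simp
          rw [Finset.sum_congr rfl this] at h
          simp at h
        · rw [if_neg hz] at h
          simp at h
    have hmass2 : ∫⁻ ω, ζnp n ω Set.univ ∂P
        = (∫⁻ ω, ζ ω Set.univ ∂P) + (n : ℝ≥0∞) * ENNReal.ofReal (p n) := by
      have h1 : ∀ ω, ζnp n ω Set.univ = ζ ω Set.univ +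
          Set.indicator {ω' | Z n ω' = true} (fun _ => (n : ℝ≥0∞)) ω := by
        intro ω
        rw [hζnp n ω, Measure.add_apply]
        congr 1
        by_cases hz : Z n ω = true
        · rw [if_pos hz, Set.indicator_of_mem (show ω ∈ {ω' | Z n ω' = true} from hz), Measure.finset_sum_apply]
          have : ∀ i ∈ Finset.range n, Measure.dirac (X i ω) Set.univ = 1 := fun i _ => by
            simp
          rw [Finset.sum_congr rfl this]
          simp
        · rw [if_neg hz, Set.indicator_of_notMem (show ω ∉ {ω' | Z n ω' = true} from hz)]
          simp
      have hZset : MeasurableSet {ω | Z n ω = true} :=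
        (hZmeas n) (measurableSet_singleton true)
      simp_rw [h1]
      rw [lintegral_add_left hfmeas, lintegral_indicator hZset, setLIntegral_const, hZlaw n]
    refine le_iInf ?_
    rintro ⟨C, hC1, hC2⟩
    have hcoe : Measurable fun μ : Measure Y => μ Set.univ :=
      Measure.measurable_coe MeasurableSet.univ
    have hI1 : ∫⁻ q, q.1 Set.univ ∂C = ∫⁻ ω, ζ ω Set.univ ∂P := by
      rw [← lintegral_map hcoe measurable_fst, hC1, lintegral_map hcoe hζmeas]
    have hI2 : ∫⁻ q, q.2 Set.univ ∂C
        = (∫⁻ ω, ζ ω Set.univ ∂P) + (n : ℝ≥0∞) * ENNReal.ofReal (p n) := by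
      rw [← lintegral_map hcoe measurable_snd, hC2, lintegral_map hcoe (hζnpmeas n), hmass2]
    have hCnull : C ((Prod.fst ⁻¹' T) ∪ (Prod.snd ⁻¹' T) : Set (Measure Y × Measure Y)) = 0 := by
      refine measure_union_null ?_ ?_
      · rw [← Measure.map_apply measurable_fst hTmeas, hC1]
        exact hν₁T
      · rw [← Measure.map_apply measurable_snd hTmeas, hC2]
        exact hν₂T
    have hae : ∀ᵐ q ∂C, q.2 Set.univ - q.1 Set.univ ≤ ENNReal.ofReal (measureTV q.1 q.2) := by
      rw [ae_iff]
      refine measure_mono_null ?_ hCnull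
      intro q hq
      simp only [Set.mem_setOf_eq, not_le] at hq
      by_contra hmem
      simp only [Set.mem_union, Set.mem_preimage, hT, Set.mem_setOf_eq, not_or] at hmem
      exact absurd (mass_sub_le_ofReal_measureTV q.1 q.2 hmem.1 hmem.2) (not_le.2 hq)
    calc ENNReal.ofReal ((n : ℝ) * p n) = (n : ℝ≥0∞) * ENNReal.ofReal (p n) := by
          rw [ENNReal.ofReal_mul (by positivity : (0:ℝ) ≤ (n:ℝ)), ENNReal.ofReal_natCast]
      _ = ((∫⁻ ω, ζ ω Set.univ ∂P) + (n : ℝ≥0∞) * ENNReal.ofReal (p n))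
          - ∫⁻ ω, ζ ω Set.univ ∂P := (ENNReal.add_sub_cancel_left hIζ).symm
      _ = (∫⁻ q, q.2 Set.univ ∂C) - ∫⁻ q, q.1 Set.univ ∂C := by rw [hI1, hI2]
      _ ≤ ∫⁻ q, q.2 Set.univ - q.1 Set.univ ∂C :=
          lintegral_sub_le _ _ (hcoe.comp measurable_fst)
      _ ≤ ∫⁻ q, ENNReal.ofReal (measureTV q.1 q.2) ∂C := lintegral_mono_ae hae
  refine ⟨part1, part2, fun hpn => ⟨?_, ?_⟩⟩
  · have h0 : ∀ n, 0 ≤ ppTV P ζ (ζnp n) := fun n => Real.iSup_nonneg fun A => abs_nonneg _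
    refine squeeze_zero h0 part1 ?_
    have hs : Tendsto (fun n : ℕ => Real.sqrt n) atTop atTop :=
      tendsto_sqrt_atTop'.comp tendsto_natCast_atTop_atTop
    have : Tendsto (fun n : ℕ => 1 / Real.sqrt n) atTop (nhds 0) := by
      simpa [one_div, Pi.inv_def] using hs.inv_tendsto_atTop
    exact this.congr fun n => (hpn n).symm
  · rw [ENNReal.tendsto_nhds_top_iff_nat]
    intro m
    filter_upwards [eventually_ge_atTop ((m + 1) ^ 2)] with n hn
    have hn1 : 1 ≤ n := le_trans (Nat.one_le_iff_ne_zero.2 (by positivity)) hn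
    have h1 : (n : ℝ) * p n = Real.sqrt n := by
      rw [hpn n, mul_one_div, Real.div_sqrt]
    have h2 : ((m : ℝ≥0∞)) < ENNReal.ofReal ((n : ℝ) * p n) := by
      rw [h1, ← ENNReal.ofReal_natCast m]
      rw [ENNReal.ofReal_lt_ofReal_iff (by
        have : (0:ℝ) < n := by exact_mod_cast hn1
        exact Real.sqrt_pos.2 this)]
      have hmn : ((m : ℝ) + 1) ^ 2 ≤ (n : ℝ) := by exact_mod_cast hn
      calc (m : ℝ) < (m : ℝ) + 1 := by linarith
        _ = Real.sqrt (((m : ℝ) + 1) ^ 2) := (Real.sqrt_sq (by positivity)).symm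
        _ ≤ Real.sqrt n := Real.sqrt_le_sqrt hmn
    exact h2.trans_le (part2 n)
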